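/- Variance of the factorial effect estimator: in a completely randomized 2^K factorial experiment, for every nonempty subset ℓ ⊆ {1,…,K}, Var(τ̂_ℓ) = 2^{−2(K−1)} Σ_{z ∈ {0,1}^K} S_z²/N_z − S²_{τ_ℓ}/N. -/

import Mathlib

open Finset

/-- The finset of completely randomized assignments of `N` units to treatments in `J`
with group sizes `Nj`. -/
def assignments (N : ℕ) {J : Type*} [Fintype J] [DecidableEq J] (Nj : J → ℕ) :
    Finset (Fin N → J) :=
  Finset.univ.filter fun T => ∀ j, (Finset.univ.filter fun i => T i = j).card = Nj j

/-- Expectation with respect to the uniform distribution on completely randomized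
assignments. -/
noncomputable def expect {N : ℕ} {J : Type*} [Fintype J] [DecidableEq J]
    (Nj : J → ℕ) (f : (Fin N → J) → ℝ) : ℝ :=
  (∑ T ∈ assignments N Nj, f T) / ((assignments N Nj).card : ℝ)

/-- Variance with respect to the randomization distribution. -/
noncomputable def rvar {N : ℕ} {J : Type*} [Fintype J] [DecidableEq J]
    (Nj : J → ℕ) (f : (Fin N → J) → ℝ) : ℝ :=
  expect Nj fun T => (f T - expect Nj f) ^ 2

/-- Covariance with respect to the randomization distribution. -/
noncomputable def rcov {N : ℕ} {J : Type*} [Fintype J] [DecidableEq J]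
    (Nj : J → ℕ) (f g : (Fin N → J) → ℝ) : ℝ :=
  expect Nj fun T => (f T - expect Nj f) * (g T - expect Nj g)

/-- Observed group mean `p_j` of treatment `j` under assignment `T`. -/
noncomputable def pObs {N : ℕ} {J : Type*} [DecidableEq J]
    (Y : Fin N → J → ℝ) (Nj : J → ℕ) (j : J) (T : Fin N → J) : ℝ :=
  (∑ i ∈ Finset.univ.filter fun i => T i = j, Y i j) / (Nj j : ℝ)

/-- Population mean `P_j`. -/
noncomputable def Pmean {N : ℕ} {J : Type*} (Y : Fin N → J → ℝ) (j : J) : ℝ :=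
  (∑ i, Y i j) / (N : ℝ)

/-- Population variance `S_j²`. -/
noncomputable def S2 {N : ℕ} {J : Type*} (Y : Fin N → J → ℝ) (j : J) : ℝ :=
  (∑ i, (Y i j - Pmean Y j) ^ 2) / ((N : ℝ) - 1)

/-- Variance of unit-level differences `S²_{j-j'}`. -/
noncomputable def S2diff {N : ℕ} {J : Type*} (Y : Fin N → J → ℝ) (j j' : J) : ℝ :=
  (∑ i, (Y i j - Y i j' - (Pmean Y j - Pmean Y j')) ^ 2) / ((N : ℝ) - 1)

/-- Contrast coefficient `λ_{ℓ,z} = Π_{k∈ℓ} (2 z_k - 1)` for a subset `ℓ` of factors and a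
treatment `z ∈ {0,1}^K`. -/
def lam {K : ℕ} (ℓ : Finset (Fin K)) (z : Fin K → Bool) : ℝ :=
  ∏ k ∈ ℓ, (if z k then 1 else -1)

/-- Finite-population factorial effect `τ_ℓ = 2^{-(K-1)} Σ_z λ_{ℓ,z} P_z`. -/
noncomputable def tauFP {N K : ℕ} (Y : Fin N → (Fin K → Bool) → ℝ) (ℓ : Finset (Fin K)) : ℝ :=
  (1 / 2 ^ (K - 1)) * ∑ z, lam ℓ z * Pmean Y z

/-- Unit-level factorial effect `τ_{i,ℓ} = 2^{-(K-1)} Σ_z λ_{ℓ,z} Y_i(z)`. -/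
noncomputable def tauUnit {N K : ℕ} (Y : Fin N → (Fin K → Bool) → ℝ) (i : Fin N)
    (ℓ : Finset (Fin K)) : ℝ :=
  (1 / 2 ^ (K - 1)) * ∑ z, lam ℓ z * Y i z

/-- Plug-in factorial effect estimator `τ̂_ℓ = 2^{-(K-1)} Σ_z λ_{ℓ,z} p_z`. -/
noncomputable def tauHat {N K : ℕ} (Y : Fin N → (Fin K → Bool) → ℝ)
    (Nj : (Fin K → Bool) → ℕ) (ℓ : Finset (Fin K)) (T : Fin N → (Fin K → Bool)) : ℝ :=
  (1 / 2 ^ (K - 1)) * ∑ z, lam ℓ z * pObs Y Nj z T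

/-- Variance of unit-level factorial effects `S²_{τ_ℓ}`. -/
noncomputable def S2tau {N K : ℕ} (Y : Fin N → (Fin K → Bool) → ℝ) (ℓ : Finset (Fin K)) : ℝ :=
  (∑ i, (tauUnit Y i ℓ - tauFP Y ℓ) ^ 2) / ((N : ℝ) - 1)

set_option linter.unusedSectionVars false

section Aux
variable {N : ℕ} {J : Type*} [Fintype J] [DecidableEq J]

variable {N : ℕ} {J : Type*} [Fintype J] [DecidableEq J]

def ind (i : Fin N) (j : J) (T : Fin N → J) : ℝ := if T i = j then 1 else 0

lemma mem_assignments {Nj : J → ℕ} {T : Fin N → J} :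
    T ∈ assignments N Nj ↔ ∀ j, (Finset.univ.filter fun i => T i = j).card = Nj j := by
  simp [assignments]

lemma comp_perm_mem {Nj : J → ℕ} (σ : Equiv.Perm (Fin N)) {T : Fin N → J}
    (hT : T ∈ assignments N Nj) : (T ∘ σ) ∈ assignments N Nj := by
  rw [mem_assignments] at hT ⊢
  intro j
  rw [← hT j]
  apply Finset.card_bij' (fun i _ => σ i) (fun i _ => σ.symm i) <;> simp [Function.comp]

lemma sum_comp_perm {Nj : J → ℕ} (σ : Equiv.Perm (Fin N)) (f : (Fin N → J) → ℝ) :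
    ∑ T ∈ assignments N Nj, f (T ∘ σ) = ∑ T ∈ assignments N Nj, f T := by
  apply Finset.sum_bij' (fun T _ => T ∘ σ) (fun T _ => T ∘ σ.symm)
  · intro T hT; exact comp_perm_mem σ hT
  · intro T hT; exact comp_perm_mem σ.symm hT
  · intro T hT; ext i; simp
  · intro T hT; ext i; simp
  · intro T hT; rfl

lemma sum_ind_of_mem {Nj : J → ℕ} {T : Fin N → J} (hT : T ∈ assignments N Nj) (j : J) :
    ∑ i, ind i j T = (Nj j : ℝ) := by
  rw [mem_assignments] at hT
  unfold ind
  rw [Finset.sum_boole, hT j]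

lemma ind_mul_ind_same (i : Fin N) (j j' : J) (T : Fin N → J) :
    ind i j T * ind i j' T = if j = j' then ind i j T else 0 := by
  rcases eq_or_ne j j' with rfl | h
  · simp only [if_pos rfl]; unfold ind; split_ifs <;> norm_num
  · rw [if_neg h]; unfold ind
    split_ifs with h1 h2
    · exact absurd (h1.symm.trans h2) h
    all_goals ring

lemma sum_ind (Nj : J → ℕ) (i : Fin N) (j : J) :
    ∑ T ∈ assignments N Nj, ind i j T
      = ((assignments N Nj).card : ℝ) * (Nj j) / (N : ℝ) := by
  have hN0 : (N : ℝ) ≠ 0 := by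
    have := i.pos
    positivity
  have hconst : ∀ i' : Fin N, (∑ T ∈ assignments N Nj, ind i' j T)
      = ∑ T ∈ assignments N Nj, ind i j T := by
    intro i'
    have h := sum_comp_perm (Nj := Nj) (Equiv.swap i i') (fun T => ind i' j T)
    simpa [ind, Function.comp, Equiv.swap_apply_right] using h.symm
  have h2 : (N : ℝ) * ∑ T ∈ assignments N Nj, ind i j T
      = ∑ i' : Fin N, ∑ T ∈ assignments N Nj, ind i' j T := by
    rw [Finset.sum_congr rfl fun i' _ => hconst i']
    simp [Finset.card_univ, mul_comm]
  have h3 : (∑ i' : Fin N, ∑ T ∈ assignments N Nj, ind i' j T)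
      = ((assignments N Nj).card : ℝ) * (Nj j) := by
    rw [Finset.sum_comm]
    rw [Finset.sum_congr rfl fun T hT => sum_ind_of_mem hT j]
    simp [mul_comm]
  rw [eq_div_iff hN0, mul_comm _ (N:ℝ), h2, h3]

lemma exists_perm_pair {a b c d : Fin N} (hab : a ≠ b) (hcd : c ≠ d) :
    ∃ σ : Equiv.Perm (Fin N), σ a = c ∧ σ b = d := by
  refine ⟨(Equiv.swap a c).trans (Equiv.swap ((Equiv.swap a c) b) d), ?_, ?_⟩
  · simp only [Equiv.trans_apply, Equiv.swap_apply_left]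
    have h1 : (Equiv.swap a c) b ≠ c := by
      rw [Ne, Equiv.swap_apply_eq_iff]
      simpa using hab.symm
    exact Equiv.swap_apply_of_ne_of_ne h1.symm hcd
  · simp [Equiv.trans_apply, Equiv.swap_apply_left]

lemma sum_ind_pair (Nj : J → ℕ) (hN : 2 ≤ N) {i i' : Fin N} (hii : i ≠ i') (j j' : J) :
    ∑ T ∈ assignments N Nj, ind i j T * ind i' j' T
      = ((assignments N Nj).card : ℝ) *
          ((Nj j : ℝ) * (Nj j') - if j = j' then (Nj j : ℝ) else 0)
        / ((N : ℝ) * ((N : ℝ) - 1)) := by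
  have hN0 : (N : ℝ) ≠ 0 := by positivity
  have hN1 : (N : ℝ) - 1 ≠ 0 := by
    have : (2:ℝ) ≤ (N:ℝ) := by exact_mod_cast hN
    linarith
  have hconst : ∀ (a b : Fin N), a ≠ b →
      (∑ T ∈ assignments N Nj, ind a j T * ind b j' T)
        = ∑ T ∈ assignments N Nj, ind i j T * ind i' j' T := by
    intro a b hab
    obtain ⟨σ, h1, h2⟩ := exists_perm_pair hii hab
    have h := sum_comp_perm (Nj := Nj) σ (fun T => ind i j T * ind i' j' T)
    rw [← h]
    refine Finset.sum_congr rfl fun T _ => ?_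
    simp [ind, Function.comp, h1, h2]
  have h2 : ((N : ℝ) * ((N : ℝ) - 1)) * ∑ T ∈ assignments N Nj, ind i j T * ind i' j' T
      = ∑ a : Fin N, ∑ b ∈ Finset.univ.erase a,
          ∑ T ∈ assignments N Nj, ind a j T * ind b j' T := by
    have hinner : ∀ a : Fin N, (∑ b ∈ Finset.univ.erase a,
        ∑ T ∈ assignments N Nj, ind a j T * ind b j' T)
          = ((N : ℝ) - 1) * ∑ T ∈ assignments N Nj, ind i j T * ind i' j' T := by
      intro a
      rw [Finset.sum_congr rfl fun b hb =>
        hconst a b (Finset.ne_of_mem_erase hb).symm]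
      rw [Finset.sum_const, Finset.card_erase_of_mem (Finset.mem_univ a),
        Finset.card_univ, Fintype.card_fin]
      rw [nsmul_eq_mul, Nat.cast_sub (by omega)]
      norm_num
    rw [Finset.sum_congr rfl fun a _ => hinner a, Finset.sum_const, Finset.card_univ,
      Fintype.card_fin, nsmul_eq_mul]
    ring
  have h3 : (∑ a : Fin N, ∑ b ∈ Finset.univ.erase a,
        ∑ T ∈ assignments N Nj, ind a j T * ind b j' T)
      = ((assignments N Nj).card : ℝ) *
          ((Nj j : ℝ) * (Nj j') - if j = j' then (Nj j : ℝ) else 0) := by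
    rw [Finset.sum_congr rfl fun a _ => Finset.sum_comm, Finset.sum_comm]
    have hT : ∀ T ∈ assignments N Nj,
        (∑ a : Fin N, ∑ b ∈ Finset.univ.erase a, ind a j T * ind b j' T)
          = (Nj j : ℝ) * (Nj j') - if j = j' then (Nj j : ℝ) else 0 := by
      intro T hTmem
      have e1 : ∀ a : Fin N, (∑ b ∈ Finset.univ.erase a, ind b j' T)
          = (Nj j' : ℝ) - ind a j' T := by
        intro a
        rw [Finset.sum_erase_eq_sub (Finset.mem_univ a), sum_ind_of_mem hTmem j']
      have e2 : (∑ a : Fin N, ind a j T * ind a j' T)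
          = if j = j' then (Nj j : ℝ) else 0 := by
        rw [Finset.sum_congr rfl fun a _ => ind_mul_ind_same a j j' T]
        by_cases h : j = j'
        · simp only [if_pos h]
          exact sum_ind_of_mem hTmem j
        · simp [h]
      calc (∑ a : Fin N, ∑ b ∈ Finset.univ.erase a, ind a j T * ind b j' T)
          = ∑ a : Fin N, ind a j T * ((Nj j' : ℝ) - ind a j' T) := by
            refine Finset.sum_congr rfl fun a _ => ?_
            rw [← Finset.mul_sum, e1 a]
        _ = (∑ a : Fin N, ind a j T) * (Nj j' : ℝ)
              - ∑ a : Fin N, ind a j T * ind a j' T := by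
            simp only [mul_sub]
            rw [Finset.sum_sub_distrib, Finset.sum_mul]
        _ = (Nj j : ℝ) * (Nj j') - if j = j' then (Nj j : ℝ) else 0 := by
            rw [sum_ind_of_mem hTmem j, e2]
    rw [Finset.sum_congr rfl hT, Finset.sum_const, nsmul_eq_mul]
  rw [eq_div_iff (by exact mul_ne_zero hN0 hN1), mul_comm _ ((N:ℝ) * ((N:ℝ)-1)), h2, h3]

lemma expect_sum {Nj : J → ℕ} {α : Type*} (s : Finset α) (f : α → (Fin N → J) → ℝ) :
    _root_.expect Nj (fun T => ∑ x ∈ s, f x T) = ∑ x ∈ s, _root_.expect Nj (f x) := by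
  unfold _root_.expect
  rw [Finset.sum_comm, Finset.sum_div]

lemma expect_const_mul {Nj : J → ℕ} (c : ℝ) (f : (Fin N → J) → ℝ) :
    _root_.expect Nj (fun T => c * f T) = c * _root_.expect Nj f := by
  unfold _root_.expect
  rw [← Finset.mul_sum, mul_div_assoc]

lemma rvar_eq' {Nj : J → ℕ} (hne : (assignments N Nj).Nonempty)
    (f : (Fin N → J) → ℝ) :
    _root_.expect Nj (fun T => (f T - _root_.expect Nj f) ^ 2)
      = _root_.expect Nj (fun T => f T ^ 2) - (_root_.expect Nj f) ^ 2 := by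
  have hM : ((assignments N Nj).card : ℝ) ≠ 0 := by
    exact_mod_cast Finset.card_ne_zero.mpr hne
  unfold _root_.expect
  set S := ∑ T ∈ assignments N Nj, f T with hS
  set M := ((assignments N Nj).card : ℝ) with hMdef
  have h1 : ∀ T : Fin N → J, (f T - S / M) ^ 2
      = f T ^ 2 - (2 * (S / M)) * f T + (S / M) ^ 2 := fun T => by ring
  rw [Finset.sum_congr rfl fun T _ => h1 T, Finset.sum_add_distrib,
    Finset.sum_sub_distrib, ← Finset.mul_sum, Finset.sum_const, nsmul_eq_mul]
  rw [← hS, ← hMdef]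
  field_simp
  ring

lemma expect_ind {Nj : J → ℕ} (hne : (assignments N Nj).Nonempty) (i : Fin N) (j : J) :
    _root_.expect Nj (ind i j) = (Nj j : ℝ) / N := by
  have hM : ((assignments N Nj).card : ℝ) ≠ 0 := by
    exact_mod_cast Finset.card_ne_zero.mpr hne
  unfold _root_.expect
  rw [show (∑ T ∈ assignments N Nj, ind i j T)
    = ((assignments N Nj).card : ℝ) * ((Nj j) / (N : ℝ)) from by
      rw [sum_ind Nj i j, mul_div_assoc]]
  rw [mul_div_cancel_left₀ _ hM]

lemma expect_ind_ind {Nj : J → ℕ} (hN : 2 ≤ N) (hne : (assignments N Nj).Nonempty)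
    (i i' : Fin N) (j j' : J) :
    _root_.expect Nj (fun T => ind i j T * ind i' j' T)
      = if i = i' then (if j = j' then (Nj j : ℝ) / N else 0)
        else ((Nj j : ℝ) * (Nj j') - if j = j' then (Nj j : ℝ) else 0)
              / ((N : ℝ) * ((N : ℝ) - 1)) := by
  have hM : ((assignments N Nj).card : ℝ) ≠ 0 := by
    exact_mod_cast Finset.card_ne_zero.mpr hne
  rcases eq_or_ne i i' with rfl | hii
  · rw [if_pos rfl]
    have hpt : ∀ T : Fin N → J, ind i j T * ind i j' T
        = if j = j' then ind i j T else 0 := fun T => ind_mul_ind_same i j j' T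
    rcases eq_or_ne j j' with rfl | hjj
    · simp only [if_pos rfl] at hpt ⊢
      rw [show (fun T => ind i j T * ind i j T) = ind i j from funext hpt]
      exact expect_ind hne i j
    · simp only [if_neg hjj] at hpt ⊢
      rw [show (fun T => ind i j T * ind i j' T) = (fun _ => (0:ℝ)) from funext hpt]
      unfold _root_.expect
      simp
  · rw [if_neg hii]
    unfold _root_.expect
    rw [sum_ind_pair Nj hN hii j j', mul_div_assoc, mul_div_cancel_left₀ _ hM]

lemma assignments_nonempty {Nj : J → ℕ} (hsum : ∑ j, Nj j = N) :
    (assignments N Nj).Nonempty := by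
  have hcard : Fintype.card (Σ j, Fin (Nj j)) = Fintype.card (Fin N) := by
    simp [Fintype.card_sigma, hsum]
  let e : (Σ j, Fin (Nj j)) ≃ Fin N := Fintype.equivOfCardEq hcard
  refine ⟨fun i => (e.symm i).1, ?_⟩
  rw [mem_assignments]
  intro j
  have h1 : (Finset.univ.filter fun i => (e.symm i).1 = j) =
      (Finset.univ.filter fun s : Σ j', Fin (Nj j') => s.1 = j).image e := by
    ext i
    simp only [mem_filter, mem_univ, true_and, mem_image]
    constructor
    · intro h; exact ⟨e.symm i, h, e.apply_symm_apply i⟩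
    · rintro ⟨s, hs, rfl⟩; simpa using hs
  rw [h1, Finset.card_image_of_injective _ e.injective, Finset.card_filter]
  rw [← Finset.univ_sigma_univ, Finset.sum_sigma]
  simp [Finset.filter_eq', apply_ite (Finset.card)]

end Aux

section Core
variable {N : ℕ} {J : Type*} [Fintype J] [DecidableEq J]
  (Nj : J → ℕ) (Y : Fin N → J → ℝ) (L : J → ℝ) (c : ℝ)

/-- weight -/
noncomputable def wF (z : J) (i : Fin N) : ℝ := c * L z * Y i z / Nj z
noncomputable def uF (z : J) : ℝ := ∑ i, wF Nj Y L c z i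
noncomputable def vF (z z' : J) : ℝ := ∑ i, wF Nj Y L c z i * wF Nj Y L c z' i
noncomputable def qF (N : ℕ) (Nj : J → ℕ) (z z' : J) : ℝ :=
  ((Nj z : ℝ) * (Nj z') - if z = z' then (Nj z : ℝ) else 0) / ((N : ℝ) * ((N : ℝ) - 1))
noncomputable def dF (N : ℕ) (Nj : J → ℕ) (z z' : J) : ℝ :=
  if z = z' then (Nj z : ℝ) / (N : ℝ) else 0

lemma estimator_rep (T : Fin N → J) :
    c * ∑ z, L z * pObs Y Nj z T = ∑ z, ∑ i, wF Nj Y L c z i * ind i z T := by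
  rw [Finset.mul_sum]
  refine Finset.sum_congr rfl fun z _ => ?_
  unfold pObs wF ind
  rw [Finset.sum_filter, Finset.sum_div, Finset.mul_sum, Finset.mul_sum]
  refine Finset.sum_congr rfl fun i _ => ?_
  split_ifs <;> ring

lemma uF_eq (z : J) : uF Nj Y L c z = c * L z * (∑ i, Y i z) / Nj z := by
  unfold uF wF
  rw [← Finset.sum_div, ← Finset.mul_sum]

lemma vF_eq (z z' : J) :
    vF Nj Y L c z z' = c ^ 2 * (L z * L z') * (∑ i, Y i z * Y i z') / (Nj z * Nj z') := by
  unfold vF wF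
  rw [show (∑ i, c * L z * Y i z / Nj z * (c * L z' * Y i z' / Nj z'))
    = ∑ i, c ^ 2 * (L z * L z') * (Y i z * Y i z') / (Nj z * Nj z') from
      Finset.sum_congr rfl fun i _ => by ring]
  rw [← Finset.sum_div, ← Finset.mul_sum]

lemma expect_estimator (hsum : ∑ j, Nj j = N) :
    _root_.expect Nj (fun T => c * ∑ z, L z * pObs Y Nj z T)
      = ∑ z, uF Nj Y L c z * ((Nj z : ℝ) / N) := by
  have hne := assignments_nonempty hsum
  rw [show (fun T => c * ∑ z, L z * pObs Y Nj z T)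
    = fun T => ∑ z, ∑ i, wF Nj Y L c z i * ind i z T from
      funext fun T => estimator_rep Nj Y L c T]
  rw [expect_sum]
  refine Finset.sum_congr rfl fun z _ => ?_
  rw [expect_sum]
  rw [Finset.sum_congr rfl fun i _ => expect_const_mul (wF Nj Y L c z i) (ind i z)]
  rw [Finset.sum_congr rfl fun i _ => by rw [expect_ind hne i z]]
  rw [← Finset.sum_mul]
  rfl

lemma expect_estimator_sq (hN : 2 ≤ N) (hsum : ∑ j, Nj j = N) :
    _root_.expect Nj (fun T => (c * ∑ z, L z * pObs Y Nj z T) ^ 2)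
      = ∑ z, ∑ z', (uF Nj Y L c z * uF Nj Y L c z' * qF N Nj z z'
          + vF Nj Y L c z z' * (dF N Nj z z' - qF N Nj z z')) := by
  have hne := assignments_nonempty hsum
  have hpt : ∀ T : Fin N → J, (c * ∑ z, L z * pObs Y Nj z T) ^ 2
      = ∑ z, ∑ z', ∑ i, ∑ i',
          (wF Nj Y L c z i * wF Nj Y L c z' i') * (ind i z T * ind i' z' T) := by
    intro T
    rw [estimator_rep Nj Y L c T, sq, Finset.sum_mul_sum]
    refine Finset.sum_congr rfl fun z _ => Finset.sum_congr rfl fun z' _ => ?_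
    rw [Finset.sum_mul_sum]
    exact Finset.sum_congr rfl fun i _ => Finset.sum_congr rfl fun i' _ => by ring
  rw [show (fun T => (c * ∑ z, L z * pObs Y Nj z T) ^ 2)
    = fun T => ∑ z, ∑ z', ∑ i, ∑ i',
        (wF Nj Y L c z i * wF Nj Y L c z' i') * (ind i z T * ind i' z' T) from
      funext hpt]
  rw [expect_sum]
  refine Finset.sum_congr rfl fun z _ => ?_
  rw [expect_sum]
  refine Finset.sum_congr rfl fun z' _ => ?_
  rw [expect_sum]
  have step1 : ∀ i : Fin N,
      _root_.expect Nj (fun T => ∑ i', (wF Nj Y L c z i * wF Nj Y L c z' i')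
          * (ind i z T * ind i' z' T))
        = ∑ i', (wF Nj Y L c z i * wF Nj Y L c z' i')
            * (if i = i' then dF N Nj z z' else qF N Nj z z') := by
    intro i
    rw [expect_sum]
    refine Finset.sum_congr rfl fun i' _ => ?_
    rw [expect_const_mul, expect_ind_ind hN hne i i' z z']
    congr 1
  rw [Finset.sum_congr rfl fun i _ => step1 i]
  have step2 : ∀ i i' : Fin N,
      (wF Nj Y L c z i * wF Nj Y L c z' i')
          * (if i = i' then dF N Nj z z' else qF N Nj z z')
        = (wF Nj Y L c z i * wF Nj Y L c z' i') * qF N Nj z z'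
          + (if i' = i then wF Nj Y L c z i * wF Nj Y L c z' i'
              * (dF N Nj z z' - qF N Nj z z') else 0) := by
    intro i i'
    rcases eq_or_ne i i' with rfl | h
    · rw [if_pos rfl, if_pos rfl]; ring
    · rw [if_neg h, if_neg (Ne.symm h)]; ring
  rw [Finset.sum_congr rfl fun i _ => Finset.sum_congr rfl fun i' _ => step2 i i']
  rw [Finset.sum_congr rfl fun i _ => Finset.sum_add_distrib, Finset.sum_add_distrib]
  congr 1
  · simp only [← Finset.sum_mul]
    rw [← Finset.sum_mul_sum]
    rfl
  · rw [Finset.sum_congr rfl fun i _ => Finset.sum_ite_eq' Finset.univ i _]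
    simp only [Finset.mem_univ, if_true]
    rw [← Finset.sum_mul]
    rfl

lemma core_var (hN : 2 ≤ N) (hpos : ∀ z, 1 ≤ Nj z) (hsum : ∑ j, Nj j = N)
    (hL : ∀ z, L z * L z = 1) :
    rvar Nj (fun T => c * ∑ z, L z * pObs Y Nj z T)
      = ∑ z, ∑ z',
          ((if z = z' then c ^ 2 * ((∑ i, Y i z * Y i z')
              - (∑ i, Y i z) * (∑ i, Y i z') / N) / (((N : ℝ) - 1) * Nj z') else 0)
            - c ^ 2 * (L z * L z') * ((∑ i, Y i z * Y i z')
              - (∑ i, Y i z) * (∑ i, Y i z') / N) / (((N : ℝ) - 1) * N)) := by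
  have hne := assignments_nonempty hsum
  have hN0 : (N : ℝ) ≠ 0 := by
    have : (0:ℕ) < N := by omega
    positivity
  have hN1 : (N : ℝ) - 1 ≠ 0 := by
    have : (2:ℝ) ≤ (N:ℝ) := by exact_mod_cast hN
    linarith
  have hNj : ∀ z, (Nj z : ℝ) ≠ 0 := fun z => by
    have := hpos z; exact Nat.cast_ne_zero.mpr (by omega)
  unfold rvar
  rw [rvar_eq' hne, expect_estimator_sq Nj Y L c hN hsum, expect_estimator Nj Y L c hsum]
  rw [sq (∑ z, uF Nj Y L c z * ((Nj z : ℝ) / N)), Finset.sum_mul_sum]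
  rw [← Finset.sum_sub_distrib]
  refine Finset.sum_congr rfl fun z _ => ?_
  rw [← Finset.sum_sub_distrib]
  refine Finset.sum_congr rfl fun z' _ => ?_
  rcases eq_or_ne z z' with rfl | hzz
  · rw [if_pos rfl]
    unfold qF dF
    rw [if_pos rfl, if_pos rfl]
    have hu2 : uF Nj Y L c z * uF Nj Y L c z
        = c ^ 2 * ((∑ i, Y i z) * (∑ i, Y i z)) / ((Nj z : ℝ) * Nj z) := by
      calc uF Nj Y L c z * uF Nj Y L c z
          = (L z * L z) * (c ^ 2 * ((∑ i, Y i z) * (∑ i, Y i z)) / ((Nj z : ℝ) * Nj z)) := by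
            rw [uF_eq]; ring
        _ = c ^ 2 * ((∑ i, Y i z) * (∑ i, Y i z)) / ((Nj z : ℝ) * Nj z) := by
            rw [hL z, one_mul]
    have hv2 : vF Nj Y L c z z
        = c ^ 2 * (∑ i, Y i z * Y i z) / ((Nj z : ℝ) * Nj z) := by
      rw [vF_eq, hL z, mul_one]
    rw [hL z, mul_one, mul_mul_mul_comm, hu2, hv2]
    have hnz := hNj z
    set nz := (Nj z : ℝ) with hnzdef
    set s1 := ∑ i, Y i z with hs1
    set s2 := ∑ i, Y i z * Y i z with hs2
    field_simp
    ring
  · rw [if_neg hzz]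
    unfold qF dF
    rw [if_neg hzz, if_neg hzz]
    rw [mul_mul_mul_comm]
    rw [show uF Nj Y L c z * uF Nj Y L c z'
        = c ^ 2 * (L z * L z') * ((∑ i, Y i z) * (∑ i, Y i z'))
            / ((Nj z : ℝ) * Nj z') from by rw [uF_eq, uF_eq]; ring]
    rw [vF_eq]
    have hnz := hNj z
    have hnz' := hNj z'
    set nz := (Nj z : ℝ) with hnzdef
    set nz' := (Nj z' : ℝ) with hnzdef'
    set s1 := ∑ i, Y i z with hs1
    set s1' := ∑ i, Y i z' with hs1'
    set s2 := ∑ i, Y i z * Y i z' with hs2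
    field_simp
    ring

end Core

lemma S2_eq {N : ℕ} {J : Type*} (hN0 : (N:ℝ) ≠ 0) (Y : Fin N → J → ℝ) (z : J) :
    S2 Y z = ((∑ i, Y i z * Y i z) - (∑ i, Y i z) * (∑ i, Y i z) / N) / ((N:ℝ) - 1) := by
  unfold S2 Pmean
  congr 1
  have h1 : ∀ i : Fin N, (Y i z - (∑ i', Y i' z) / N)^2
      = Y i z * Y i z - (2 * ((∑ i', Y i' z) / N)) * Y i z
        + ((∑ i', Y i' z) / N)^2 := fun i => by ring
  rw [Finset.sum_congr rfl fun i _ => h1 i, Finset.sum_add_distrib, Finset.sum_sub_distrib,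
    ← Finset.mul_sum, Finset.sum_const, Finset.card_univ, Fintype.card_fin, nsmul_eq_mul]
  field_simp
  ring

lemma S2tau_eq {N K : ℕ} (hN0 : (N:ℝ) ≠ 0) (Y : Fin N → (Fin K → Bool) → ℝ)
    (ℓ : Finset (Fin K)) :
    S2tau Y ℓ = (∑ z, ∑ z', ((1:ℝ)/2^(K-1))^2 * (lam ℓ z * lam ℓ z')
        * ((∑ i, Y i z * Y i z') - (∑ i, Y i z) * (∑ i, Y i z') / N)) / ((N:ℝ) - 1) := by
  unfold S2tau
  congr 1
  have hdiff : ∀ i, tauUnit Y i ℓ - tauFP Y ℓ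
      = ∑ z, (1/2^(K-1):ℝ) * lam ℓ z * (Y i z - (∑ i', Y i' z)/N) := by
    intro i
    unfold tauUnit tauFP Pmean
    rw [← mul_sub, ← Finset.sum_sub_distrib, Finset.mul_sum]
    exact Finset.sum_congr rfl fun z _ => by ring
  rw [Finset.sum_congr rfl fun i (_ : i ∈ Finset.univ) => by
    rw [hdiff i, sq, Finset.sum_mul_sum]]
  rw [Finset.sum_comm]
  refine Finset.sum_congr rfl fun z _ => ?_
  rw [Finset.sum_comm]
  refine Finset.sum_congr rfl fun z' _ => ?_
  have h2 : ∀ i : Fin N, ((1/2^(K-1):ℝ) * lam ℓ z * (Y i z - (∑ i', Y i' z)/N))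
        * ((1/2^(K-1):ℝ) * lam ℓ z' * (Y i z' - (∑ i', Y i' z')/N))
      = ((1:ℝ)/2^(K-1))^2 * (lam ℓ z * lam ℓ z')
        * ((Y i z - (∑ i', Y i' z)/N) * (Y i z' - (∑ i', Y i' z')/N)) := fun i => by ring
  rw [Finset.sum_congr rfl fun i _ => h2 i, ← Finset.mul_sum]
  congr 1
  have h3 : ∀ i : Fin N, (Y i z - (∑ i', Y i' z)/N) * (Y i z' - (∑ i', Y i' z')/N)
      = Y i z * Y i z' - ((∑ i', Y i' z)/N) * Y i z' - ((∑ i', Y i' z')/N) * Y i z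
        + ((∑ i', Y i' z)/N) * ((∑ i', Y i' z')/N) := fun i => by ring
  rw [Finset.sum_congr rfl fun i _ => h3 i, Finset.sum_add_distrib, Finset.sum_sub_distrib,
    Finset.sum_sub_distrib, ← Finset.mul_sum, ← Finset.mul_sum, Finset.sum_const,
    Finset.card_univ, Fintype.card_fin, nsmul_eq_mul]
  field_simp
  ring

/-- Variance of the factorial effect estimator: in a completely randomized `2^K` factorial
experiment, for every nonempty subset `ℓ`,
`Var(τ̂_ℓ) = 2^{-2(K-1)} Σ_z S_z²/N_z - S²_{τ_ℓ}/N`. -/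
theorem rvar_tauHat {N K : ℕ} (hN : 2 ≤ N)
    (Y : Fin N → (Fin K → Bool) → ℝ) (Nj : (Fin K → Bool) → ℕ)
    (hpos : ∀ z, 1 ≤ Nj z) (hsum : ∑ z, Nj z = N)
    (ℓ : Finset (Fin K)) (hℓ : ℓ.Nonempty) :
    rvar Nj (tauHat Y Nj ℓ) =
      (1 / 2 ^ (2 * (K - 1))) * (∑ z, S2 Y z / (Nj z : ℝ)) - S2tau Y ℓ / (N : ℝ) := by
  have hN0 : (N:ℝ) ≠ 0 := by
    have : (0:ℕ) < N := by omega
    positivity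
  have hlam2 : ∀ z, lam ℓ z * lam ℓ z = 1 := by
    intro z
    unfold lam
    rw [← Finset.prod_mul_distrib]
    apply Finset.prod_eq_one
    intro k _
    split_ifs <;> norm_num
  have hth : tauHat Y Nj ℓ = fun T => ((1:ℝ)/2^(K-1)) * ∑ z, lam ℓ z * pObs Y Nj z T := rfl
  rw [hth, core_var Nj Y (lam ℓ) ((1:ℝ)/2^(K-1)) hN hpos hsum hlam2]
  rw [Finset.sum_congr rfl fun z _ => Finset.sum_sub_distrib _ _, Finset.sum_sub_distrib]
  congr 1
  · rw [Finset.sum_congr rfl fun z (_ : z ∈ Finset.univ) => Finset.sum_ite_eq Finset.univ z _]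
    simp only [Finset.mem_univ, if_true]
    rw [show ((1:ℝ)/2^(2*(K-1))) = ((1:ℝ)/2^(K-1))^2 from by
      rw [two_mul, pow_add, div_pow, one_pow, sq]]
    rw [Finset.mul_sum]
    refine Finset.sum_congr rfl fun z _ => ?_
    rw [S2_eq hN0 Y z, div_div, mul_div_assoc]
  · rw [S2tau_eq hN0 Y ℓ, div_div]
    simp only [Finset.sum_div]
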